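/- For n ≥ 1, the number of involutions of {1,...,n} avoiding both 3412 and 4321 equals 2^{n−1}. -/

import Mathlib

def Av3412 {n : ℕ} (σ : Equiv.Perm (Fin n)) : Prop :=
  ¬ ∃ i j k l : Fin n, i < j ∧ j < k ∧ k < l ∧ σ k < σ l ∧ σ l < σ i ∧ σ i < σ j

def Av4321 {n : ℕ} (σ : Equiv.Perm (Fin n)) : Prop :=
  ¬ ∃ i j k l : Fin n, i < j ∧ j < k ∧ k < l ∧ σ l < σ k ∧ σ k < σ j ∧ σ j < σ i

namespace AvoidAux

open Equiv Finset

variable {n : ℕ}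

/-- The key structural property: the interior of every arc is fixed. -/
def Good (σ : Equiv.Perm (Fin n)) : Prop :=
  ∀ a x : Fin n, a < σ a → a < x → x < σ a → σ x = x

lemma invol_apply {σ : Equiv.Perm (Fin n)} (h : σ * σ = 1) (x : Fin n) : σ (σ x) = x := by
  have := Equiv.ext_iff.mp h x
  simpa using this

lemma good_of_avoid {σ : Equiv.Perm (Fin n)} (hinv : ∀ x, σ (σ x) = x)
    (h3 : Av3412 σ) (h4 : Av4321 σ) : Good σ := by
  intro a x hax hax1 hax2
  by_contra hx
  have hσb : σ (σ a) = a := hinv a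
  have hσd : σ (σ x) = x := hinv x
  have hda : σ x ≠ a := by
    intro h
    have : σ (σ x) = σ a := by rw [h]
    rw [hσd] at this
    exact absurd (this ▸ hax2) (lt_irrefl _)
  have hdb : σ x ≠ σ a := by
    intro h
    have := σ.injective h
    exact absurd (this ▸ hax1) (lt_irrefl _)
  rcases lt_trichotomy (σ x) a with h1 | h1 | h1
  · refine h3 ⟨σ x, a, x, σ a, h1, hax1, hax2, ?_, ?_, ?_⟩
    · rw [hσb]; exact h1
    · rw [hσb, hσd]; exact hax1
    · rw [hσd]; exact hax2
  · exact hda h1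
  · rcases lt_trichotomy (σ x) x with h2 | h2 | h2
    · refine h4 ⟨a, σ x, x, σ a, h1, h2, hax2, ?_, ?_, ?_⟩
      · rw [hσb]; exact h1
      · rw [hσd]; exact h2
      · rw [hσd]; exact hax2
    · exact hx h2
    · rcases lt_trichotomy (σ x) (σ a) with h5 | h5 | h5
      · refine h4 ⟨a, x, σ x, σ a, hax1, h2, h5, ?_, ?_, ?_⟩
        · rw [hσb, hσd]; exact hax1
        · rw [hσd]; exact h2
        · exact h5
      · exact hdb h5
      · refine h3 ⟨a, x, σ a, σ x, hax1, hax2, h5, ?_, ?_, ?_⟩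
        · rw [hσb, hσd]; exact hax1
        · rw [hσd]; exact hax2
        · exact h5

lemma star {σ : Equiv.Perm (Fin n)} (hinv : ∀ x, σ (σ x) = x) (hg : Good σ)
    {i j : Fin n} (hij : i < j) (h : σ j < σ i) : j ≤ σ i ∨ σ j ≤ i := by
  by_contra hc
  push_neg at hc
  obtain ⟨h1, h2⟩ := hc
  have hii : i < σ i := lt_trans h2 h
  have := hg i (σ j) hii h2 h
  rw [hinv j] at this
  rw [← this] at h
  exact absurd (lt_trans h h1) (lt_irrefl _)

lemma av4321_of_good {σ : Equiv.Perm (Fin n)} (hinv : ∀ x, σ (σ x) = x) (hg : Good σ) :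
    Av4321 σ := by
  rintro ⟨i, j, k, l, hij, hjk, hkl, h1, h2, h3⟩
  rcases star hinv hg hjk h2 with h | h
  · -- k ≤ σ j : then i < σ i and j interior of (i, σ i)
    have hσj : j < σ j := lt_of_lt_of_le hjk h
    have hσi : i < σ i := lt_trans (lt_trans hij hσj) h3
    have := hg i j hσi hij (lt_trans hσj h3)
    rw [this] at hσj
    exact absurd hσj (lt_irrefl _)
  · -- σ k ≤ j : then σ l < l and k interior of (σ l, l)
    have hσl : σ l < l := lt_trans (lt_of_lt_of_le h1 h) (lt_trans hjk hkl)
    have hll : σ l < σ (σ l) := by rw [hinv l]; exact hσl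
    have := hg (σ l) k hll (lt_trans (lt_of_lt_of_le h1 h) hjk) (by rw [hinv l]; exact hkl)
    rw [this] at h
    exact absurd (lt_of_lt_of_le hjk h) (lt_irrefl _)

lemma av3412_of_good {σ : Equiv.Perm (Fin n)} (hinv : ∀ x, σ (σ x) = x) (hg : Good σ) :
    Av3412 σ := by
  rintro ⟨i, j, k, l, hij, hjk, hkl, h1, h2, h3⟩
  have hσkj : σ k < σ j := lt_trans h1 (lt_trans h2 h3)
  rcases star hinv hg hjk hσkj with h | h
  · -- k ≤ σ j
    have hjσj : j < σ j := lt_of_lt_of_le hjk h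
    rcases lt_trichotomy l (σ j) with h5 | h5 | h5
    · -- l interior of (j, σ j), so σ l = l; then j interior of (i, σ i)
      have hfl := hg j l hjσj (lt_trans hjk hkl) h5
      have hσi : i < σ i := by
        have : (l : Fin n) < σ i := by rw [← hfl]; exact h2
        exact lt_trans (lt_trans hij (lt_trans hjk hkl)) this
      have := hg i j hσi hij (lt_trans (lt_trans hjk hkl) (by rw [← hfl]; exact h2))
      rw [this] at hjσj
      exact absurd hjσj (lt_irrefl _)
    · -- l = σ j, so σ l = j ; then j interior of (i, σ i)
      have hσl : σ l = j := by rw [h5, hinv j]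
      have hjσi : j < σ i := by rw [← hσl]; exact h2
      have hσi : i < σ i := lt_trans hij hjσi
      have := hg i j hσi hij hjσi
      rw [this] at hjσj
      exact absurd hjσj (lt_irrefl _)
    · -- σ j < l : σ j interior of (σ l, l)
      have hσl : σ l < l := lt_trans (lt_trans h2 h3) h5
      have hll : σ l < σ (σ l) := by rw [hinv l]; exact hσl
      have := hg (σ l) (σ j) hll (lt_trans h2 h3) (by rw [hinv l]; exact h5)
      rw [hinv j] at this
      rw [← this] at hjσj
      exact absurd hjσj (lt_irrefl _)
  · -- σ k ≤ j
    have hσkk : σ k < k := lt_of_le_of_lt h hjk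
    rcases lt_or_eq_of_le h with h5 | h5
    · -- σ k < j : j interior of (σ k, k), so σ j = j; then k interior of (σ l, l)
      have hkk : σ k < σ (σ k) := by rw [hinv k]; exact hσkk
      have hfj : σ j = j := hg (σ k) j hkk h5 (by rw [hinv k]; exact hjk)
      have hσlj : σ l < j := by rw [← hfj]; exact lt_trans h2 h3
      have hσll : σ l < l := lt_trans hσlj (lt_trans hjk hkl)
      have hll : σ l < σ (σ l) := by rw [hinv l]; exact hσll
      have hfk : σ k = k := hg (σ l) k hll (lt_trans hσlj hjk) (by rw [hinv l]; exact hkl)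
      rw [hfk] at hσkk
      exact absurd hσkk (lt_irrefl _)
    · -- σ k = j, so σ j = k, σ i < k
      have hσj : σ j = k := by rw [← h5, hinv k]
      have hσik : σ i < k := by rw [← hσj]; exact h3
      have hσll : σ l < l := lt_trans (lt_trans h2 hσik) hkl
      have hll : σ l < σ (σ l) := by rw [hinv l]; exact hσll
      have := hg (σ l) k hll (lt_trans h2 hσik) (by rw [hinv l]; exact hkl)
      rw [this] at hσkk
      exact absurd hσkk (lt_irrefl _)

/-- The set of non-fixed points. -/
def Dset (σ : Equiv.Perm (Fin n)) : Finset (Fin n) :=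
  Finset.filter (fun x => σ x ≠ x) Finset.univ

lemma mem_Dset {σ : Equiv.Perm (Fin n)} {x : Fin n} : x ∈ Dset σ ↔ σ x ≠ x := by
  simp [Dset]

lemma even_card_pairing (f : Fin n → Fin n) (s : Finset (Fin n))
    (h1 : ∀ x ∈ s, f x ∈ s) (h2 : ∀ x ∈ s, f x ≠ x) (h3 : ∀ x ∈ s, f (f x) = x) :
    Even s.card := by
  classical
  induction s using Finset.strongInduction with
  | _ s ih =>
    rcases s.eq_empty_or_nonempty with rfl | ⟨a, ha⟩
    · simp
    · have hfa : f a ∈ s := h1 a ha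
      have hfa' : f a ≠ a := h2 a ha
      set t := (s.erase a).erase (f a) with ht
      have hsub : t ⊂ s := by
        refine Finset.ssubset_of_subset_of_ssubset ?_ (Finset.erase_ssubset ha)
        exact Finset.erase_subset _ _
      have hts : t ⊆ s := hsub.subset
      have hmem : ∀ x ∈ t, f x ∈ t := by
        intro x hx
        have hxs : x ∈ s := hts hx
        have hx1 : x ≠ f a := (Finset.mem_erase.mp hx).1
        have hx2 : x ≠ a := (Finset.mem_erase.mp (Finset.mem_erase.mp hx).2).1
        refine Finset.mem_erase.mpr ⟨?_, Finset.mem_erase.mpr ⟨?_, h1 x hxs⟩⟩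
        · intro h; apply hx2; rw [← h3 x hxs, h, h3 a ha]
        · intro h; apply hx1; rw [← h3 x hxs, h]
      have heven := ih t hsub hmem (fun x hx => h2 x (hts hx)) (fun x hx => h3 x (hts hx))
      have hcard : s.card = t.card + 2 := by
        have hmem2 : f a ∈ s.erase a := Finset.mem_erase.mpr ⟨hfa', hfa⟩
        rw [ht, Finset.card_erase_of_mem hmem2, Finset.card_erase_of_mem ha]
        have h2' : 1 < s.card := Finset.one_lt_card_iff.mpr ⟨a, f a, ha, hfa, fun h => hfa' h.symm⟩
        omega
      rw [hcard]
      exact heven.add (by norm_num)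

lemma even_card_Dset {σ : Equiv.Perm (Fin n)} (hinv : ∀ x, σ (σ x) = x) :
    Even (Dset σ).card := by
  apply even_card_pairing σ
  · intro x hx
    rw [mem_Dset] at *
    rw [hinv x]
    exact fun h => hx h.symm
  · intro x hx; rw [mem_Dset] at hx; exact hx
  · intro x _; exact hinv x

lemma eq_of_Dset_eq {σ τ : Equiv.Perm (Fin n)} (hinvσ : ∀ x, σ (σ x) = x) (hgσ : Good σ)
    (hinvτ : ∀ x, τ (τ x) = x) (hgτ : Good τ) (h : Dset σ = Dset τ) : σ = τ := by
  by_contra hne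
  have hFne : (Finset.filter (fun x => σ x ≠ τ x) Finset.univ).Nonempty := by
    by_contra hc
    rw [Finset.not_nonempty_iff_eq_empty, Finset.filter_eq_empty_iff] at hc
    apply hne
    apply Equiv.ext
    intro x
    have := hc (Finset.mem_univ x)
    simpa using this
  set F := Finset.filter (fun x => σ x ≠ τ x) Finset.univ with hF
  set a := F.min' hFne with haa
  have haF : a ∈ F := F.min'_mem hFne
  have hane : σ a ≠ τ a := by
    have := Finset.mem_filter.mp haF
    exact this.2
  have hmin : ∀ y : Fin n, y < a → σ y = τ y := by
    intro y hy
    by_contra hc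
    have : y ∈ F := Finset.mem_filter.mpr ⟨Finset.mem_univ y, hc⟩
    exact absurd (F.min'_le y this) (not_le.mpr hy)
  have haD : σ a ≠ a := by
    intro hc
    have : a ∉ Dset σ := by rw [mem_Dset]; exact fun h => h hc
    rw [h, mem_Dset] at this
    push_neg at this
    exact hane (by rw [hc, this])
  have haDτ : τ a ≠ a := by
    intro hc
    have : a ∉ Dset τ := by rw [mem_Dset]; exact fun h => h hc
    rw [← h, mem_Dset] at this
    push_neg at this
    exact hane (by rw [hc, this])
  have hlt : a < σ a := by
    rcases lt_or_gt_of_ne haD with hc | hc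
    · exfalso
      have h1 : σ (σ a) = τ (σ a) := hmin (σ a) hc
      rw [hinvσ a] at h1
      have h2 := congrArg τ h1.symm
      rw [hinvτ] at h2
      exact hane h2
    · exact hc
  have hltτ : a < τ a := by
    rcases lt_or_gt_of_ne haDτ with hc | hc
    · exfalso
      have h1 : σ (τ a) = τ (τ a) := hmin (τ a) hc
      rw [hinvτ a] at h1
      have h2 := congrArg σ h1
      rw [hinvσ] at h2
      exact hane h2.symm
    · exact hc
  -- σ a ∈ Dset τ, τ a ∈ Dset σ
  have hσaD : σ a ∈ Dset τ := by
    rw [← h, mem_Dset, hinvσ a]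
    exact fun hc => haD hc.symm
  have hτaD : τ a ∈ Dset σ := by
    rw [h, mem_Dset, hinvτ a]
    exact fun hc => haDτ hc.symm
  rcases lt_trichotomy (σ a) (τ a) with hc | hc | hc
  · have := hgτ a (σ a) hltτ hlt hc
    rw [mem_Dset] at hσaD
    exact hσaD this
  · exact hane hc
  · have := hgσ a (τ a) hlt hltτ hc
    rw [mem_Dset] at hτaD
    exact hτaD this

/-! ### Construction of the involution from a finset -/

def pairPerm : List (Fin n) → Equiv.Perm (Fin n)
  | a :: b :: t => Equiv.swap a b * pairPerm t
  | _ => 1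

lemma pairPerm_nil : pairPerm ([] : List (Fin n)) = 1 := rfl

lemma pairPerm_single (a : Fin n) : pairPerm [a] = 1 := rfl

lemma pairPerm_cons (a b : Fin n) (t : List (Fin n)) :
    pairPerm (a :: b :: t) = Equiv.swap a b * pairPerm t := rfl

lemma pairPerm_fixed : ∀ (l : List (Fin n)) (x : Fin n), x ∉ l → pairPerm l x = x
  | [], _, _ => rfl
  | [_], _, _ => rfl
  | a :: b :: t, x, h => by
    have hxa : x ≠ a := fun hc => h (hc ▸ List.mem_cons_self (a := a) (l := b :: t))
    have hxb : x ≠ b := fun hc => h (by rw [hc]; exact List.mem_cons_of_mem a (List.mem_cons_self (a := b) (l := t)))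
    have hxt : x ∉ t := fun hc => h (List.mem_cons_of_mem a (List.mem_cons_of_mem b hc))
    rw [pairPerm_cons, Equiv.Perm.mul_apply, pairPerm_fixed t x hxt,
      Equiv.swap_apply_of_ne_of_ne hxa hxb]

lemma pairPerm_mem {l : List (Fin n)} {x : Fin n} (h : pairPerm l x ≠ x) : x ∈ l := by
  by_contra hc
  exact h (pairPerm_fixed l x hc)

lemma pairPerm_invol : ∀ (l : List (Fin n)), l.Nodup → pairPerm l * pairPerm l = 1
  | [], _ => rfl
  | [_], _ => rfl
  | a :: b :: t, hnd => by
    have hat : a ∉ t := fun hc => (List.nodup_cons.mp hnd).1 (List.mem_cons_of_mem b hc)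
    have hbt : b ∉ t := (List.nodup_cons.mp (List.nodup_cons.mp hnd).2).1
    have hd : (Equiv.swap a b).Disjoint (pairPerm t) := by
      intro x
      by_cases hx : x ∈ t
      · left
        apply Equiv.swap_apply_of_ne_of_ne
        · rintro rfl; exact hat hx
        · rintro rfl; exact hbt hx
      · right; exact pairPerm_fixed t x hx
    have ht : pairPerm t * pairPerm t = 1 :=
      pairPerm_invol t (List.nodup_cons.mp (List.nodup_cons.mp hnd).2).2
    rw [pairPerm_cons, (hd.commute.symm).mul_mul_mul_comm, ht, Equiv.swap_mul_self, one_mul]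

lemma pairPerm_apply_apply {l : List (Fin n)} (hnd : l.Nodup) (x : Fin n) :
    pairPerm l (pairPerm l x) = x := by
  have := Equiv.ext_iff.mp (pairPerm_invol l hnd) x
  simpa using this

lemma pairPerm_mem_of_mem {l : List (Fin n)} (hnd : l.Nodup) {x : Fin n} (hx : x ∈ l)
    (hne : pairPerm l x ≠ x) : pairPerm l x ∈ l := by
  by_contra hc
  have := pairPerm_fixed l _ hc
  rw [pairPerm_apply_apply hnd] at this
  exact hne this.symm

lemma pairPerm_moves : ∀ (l : List (Fin n)), l.Nodup → Even l.length →
    ∀ x ∈ l, pairPerm l x ≠ x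
  | [], _, _ => by intro x hx; simp at hx
  | [_], _, he => by simp at he
  | a :: b :: t, hnd, he => by
    have hab : a ≠ b := fun hc => (List.nodup_cons.mp hnd).1 (hc ▸ List.mem_cons_self (a := b) (l := t))
    have hat : a ∉ t := fun hc => (List.nodup_cons.mp hnd).1 (List.mem_cons_of_mem b hc)
    have hbt : b ∉ t := (List.nodup_cons.mp (List.nodup_cons.mp hnd).2).1
    have hndt : t.Nodup := (List.nodup_cons.mp (List.nodup_cons.mp hnd).2).2
    have het : Even t.length := by
      simp only [List.length_cons] at he
      rcases he with ⟨k, hk⟩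
      exact ⟨k - 1, by omega⟩
    intro x hx
    rcases List.mem_cons.mp hx with rfl | hx
    · rw [pairPerm_cons, Equiv.Perm.mul_apply, pairPerm_fixed t x hat, Equiv.swap_apply_left]
      exact hab.symm
    rcases List.mem_cons.mp hx with rfl | hx
    · rw [pairPerm_cons, Equiv.Perm.mul_apply, pairPerm_fixed t x hbt, Equiv.swap_apply_right]
      exact hab
    · have h2 := pairPerm_moves t hndt het x hx
      have h1 := pairPerm_mem_of_mem hndt hx h2
      rw [pairPerm_cons, Equiv.Perm.mul_apply,
        Equiv.swap_apply_of_ne_of_ne (fun hc => hat (by rwa [hc] at h1))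
          (fun hc => hbt (by rwa [hc] at h1))]
      exact h2

lemma pairPerm_good : ∀ (l : List (Fin n)), l.Pairwise (· < ·) →
    ∀ a x : Fin n, a < pairPerm l a → a < x → x < pairPerm l a → pairPerm l x = x
  | [], _ => by
    intro a x h1 _ _
    rw [pairPerm_nil] at h1
    exact absurd h1 (lt_irrefl _)
  | [c], _ => by
    intro a x h1 _ _
    rw [pairPerm_single] at h1
    exact absurd h1 (lt_irrefl _)
  | c :: d :: t, hs => by
    intro a x h1 h2 h3
    have hcd : c < d := (List.pairwise_cons.mp hs).1 d (List.mem_cons_self (a := d) (l := t))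
    have hct : ∀ y ∈ t, c < y := fun y hy =>
      (List.pairwise_cons.mp hs).1 y (List.mem_cons_of_mem d hy)
    have hst : (d :: t).Pairwise (· < ·) := (List.pairwise_cons.mp hs).2
    have hdt : ∀ y ∈ t, d < y := fun y hy => (List.pairwise_cons.mp hst).1 y hy
    have hstt : t.Pairwise (· < ·) := (List.pairwise_cons.mp hst).2
    have hc_t : c ∉ t := fun hc => absurd (hct c hc) (lt_irrefl _)
    have hd_t : d ∉ t := fun hc => absurd (hdt d hc) (lt_irrefl _)
    have hndt : t.Nodup := hstt.nodup
    by_cases hac : a = c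
    · subst hac
      have hσa : pairPerm (a :: d :: t) a = d := by
        rw [pairPerm_cons, Equiv.Perm.mul_apply, pairPerm_fixed t a hc_t, Equiv.swap_apply_left]
      rw [hσa] at h3
      -- x strictly between a=c and d : x not in list
      have hxa : x ≠ a := fun hc => absurd (hc ▸ h2) (lt_irrefl _)
      have hxd : x ≠ d := fun hc => absurd (hc ▸ h3) (lt_irrefl _)
      have hxt : x ∉ t := fun hc => absurd (lt_trans h3 (hdt x hc)) (lt_irrefl _)
      rw [pairPerm_cons, Equiv.Perm.mul_apply, pairPerm_fixed t x hxt,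
        Equiv.swap_apply_of_ne_of_ne hxa hxd]
    by_cases had : a = d
    · subst had
      have hσa : pairPerm (c :: a :: t) a = c := by
        rw [pairPerm_cons, Equiv.Perm.mul_apply, pairPerm_fixed t a hd_t, Equiv.swap_apply_right]
      rw [hσa] at h1
      exact absurd (lt_trans h1 hcd) (lt_irrefl _)
    · -- a not c, d
      by_cases hpa : pairPerm t a = a
      · exfalso
        have : pairPerm (c :: d :: t) a = a := by
          rw [pairPerm_cons, Equiv.Perm.mul_apply, hpa,
            Equiv.swap_apply_of_ne_of_ne hac had]
        rw [this] at h1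
        exact absurd h1 (lt_irrefl _)
      · have hat : a ∈ t := pairPerm_mem hpa
        have hpat : pairPerm t a ∈ t := pairPerm_mem_of_mem hndt hat hpa
        have hσa : pairPerm (c :: d :: t) a = pairPerm t a := by
          rw [pairPerm_cons, Equiv.Perm.mul_apply,
            Equiv.swap_apply_of_ne_of_ne (fun hc => hc_t (by rwa [hc] at hpat))
              (fun hc => hd_t (by rwa [hc] at hpat))]
        rw [hσa] at h1 h3
        have hpx := pairPerm_good t hstt a x h1 h2 h3
        have hxc : x ≠ c := fun hc => absurd (lt_trans (hc ▸ h2) (lt_trans hcd (hdt a hat)))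
          (lt_irrefl _)
        have hxd : x ≠ d := fun hc => absurd (lt_trans (hc ▸ h2) (hdt a hat)) (lt_irrefl _)
        rw [pairPerm_cons, Equiv.Perm.mul_apply, hpx, Equiv.swap_apply_of_ne_of_ne hxc hxd]

def invOf (s : Finset (Fin n)) : Equiv.Perm (Fin n) := pairPerm (s.sort (· ≤ ·))

lemma invOf_invol (s : Finset (Fin n)) : invOf s * invOf s = 1 :=
  pairPerm_invol _ (s.sort_nodup _)

lemma invOf_good (s : Finset (Fin n)) : Good (invOf s) :=
  fun a x h1 h2 h3 => pairPerm_good _ (s.sortedLT_sort.pairwise) a x h1 h2 h3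

lemma Dset_invOf {s : Finset (Fin n)} (hs : Even s.card) : Dset (invOf s) = s := by
  ext x
  rw [mem_Dset]
  constructor
  · intro h
    have := pairPerm_mem h
    rwa [Finset.mem_sort] at this
  · intro h
    apply pairPerm_moves _ (s.sort_nodup _) _ x ((Finset.mem_sort _).mpr h)
    rwa [Finset.length_sort]

end AvoidAux

theorem card_involutions_avoiding_3412_4321 (n : ℕ) (hn : 1 ≤ n) :
    Nat.card {τ : Equiv.Perm (Fin n) // τ * τ = 1 ∧ Av3412 τ ∧ Av4321 τ} =
      2 ^ (n - 1) := by
  classical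
  have hbij : Function.Bijective
      (fun τ : {τ : Equiv.Perm (Fin n) // τ * τ = 1 ∧ Av3412 τ ∧ Av4321 τ} =>
        (⟨AvoidAux.Dset τ.1, AvoidAux.even_card_Dset (AvoidAux.invol_apply τ.2.1)⟩ :
          {s : Finset (Fin n) // Even s.card})) := by
    constructor
    · rintro ⟨σ, hσ1, hσ2, hσ3⟩ ⟨τ, hτ1, hτ2, hτ3⟩ hst
      simp only [Subtype.mk.injEq] at hst ⊢
      exact AvoidAux.eq_of_Dset_eq (AvoidAux.invol_apply hσ1)
        (AvoidAux.good_of_avoid (AvoidAux.invol_apply hσ1) hσ2 hσ3)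
        (AvoidAux.invol_apply hτ1)
        (AvoidAux.good_of_avoid (AvoidAux.invol_apply hτ1) hτ2 hτ3) hst
    · rintro ⟨s, hs⟩
      have hinv := AvoidAux.invOf_invol s
      have hinva := AvoidAux.invol_apply hinv
      have hgood := AvoidAux.invOf_good s
      refine ⟨⟨AvoidAux.invOf s, hinv, AvoidAux.av3412_of_good hinva hgood,
        AvoidAux.av4321_of_good hinva hgood⟩, ?_⟩
      simp only [Subtype.mk.injEq]
      exact AvoidAux.Dset_invOf hs
  rw [Nat.card_eq_of_bijective _ hbij]
  -- now count even-cardinality subsets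
  rw [Nat.card_eq_fintype_card, Fintype.card_subtype]
  have x0 : Fin n := ⟨0, hn⟩
  set tog := fun s : Finset (Fin n) => if x0 ∈ s then s.erase x0 else insert x0 s with htog
  have htogtog : ∀ s, tog (tog s) = s := by
    intro s
    by_cases h : x0 ∈ s
    · simp only [htog, if_pos h]
      rw [if_neg (Finset.notMem_erase x0 s), Finset.insert_erase h]
    · simp only [htog, if_neg h]
      rw [if_pos (Finset.mem_insert_self x0 s), Finset.erase_insert h]
  have htogcard : ∀ s : Finset (Fin n), Even (tog s).card ↔ ¬ Even s.card := by
    intro s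
    by_cases h : x0 ∈ s
    · have h1 : 1 ≤ s.card := Finset.card_pos.mpr ⟨x0, h⟩
      simp only [htog, if_pos h, Finset.card_erase_of_mem h]
      rw [Nat.even_iff, Nat.even_iff]
      omega
    · simp only [htog, if_neg h, Finset.card_insert_of_notMem h]
      rw [Nat.even_iff, Nat.even_iff]
      omega
  have hAB : (Finset.filter (fun s : Finset (Fin n) => Even s.card) Finset.univ).card =
      (Finset.filter (fun s : Finset (Fin n) => ¬ Even s.card) Finset.univ).card := by
    apply Finset.card_bij' (fun s _ => tog s) (fun s _ => tog s)
    · intro s hs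
      rw [Finset.mem_filter] at hs ⊢
      exact ⟨Finset.mem_univ _, by rw [htogcard]; exact fun hc => hc hs.2⟩
    · intro s hs
      rw [Finset.mem_filter] at hs ⊢
      exact ⟨Finset.mem_univ _, (htogcard s).mpr hs.2⟩
    · intro s _; exact htogtog s
    · intro s _; exact htogtog s
  have htot : (Finset.filter (fun s : Finset (Fin n) => Even s.card) Finset.univ).card +
      (Finset.filter (fun s : Finset (Fin n) => ¬ Even s.card) Finset.univ).card = 2 ^ n := by
    rw [Finset.card_filter_add_card_filter_not]
    rw [Finset.card_univ, Fintype.card_finset, Fintype.card_fin]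
  have hpow : 2 ^ n = 2 ^ (n - 1) * 2 := by
    rw [← pow_succ]
    congr 1
    omega
  omega
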